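/- Let b ≥ 2 be an integer, j₁ ∈ ℕ₀ = {0,1,2,…}, m₁ ∈ {0,…,b^{j₁}−1}, ℓ₁ ∈ {1,…,b−1}. Then ∫_{[0,1)²} x₁x₂ · h_{j₁,m₁,ℓ₁}(x₁) dx₁dx₂ = (1/2) · b^{−2j₁−1} / (exp(2πiℓ₁/b) − 1). -/

import Mathlib

open Finset MeasureTheory

/-- `bexp b ℓ k = exp(2πiℓk/b)`. -/
noncomputable def bexp (b ℓ k : ℕ) : ℂ :=
  Complex.exp (2 * Real.pi * Complex.I * ℓ * k / b)

/-- The `b`-adic Haar function `h_{j,m,ℓ}` on `[0,1)`. -/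
noncomputable def haar (b j m ℓ : ℕ) (x : ℝ) : ℂ :=
  ∑ k ∈ Finset.range b,
    if ((b:ℝ)^(j+1))⁻¹ * ((b:ℝ)*m + k) ≤ x ∧ x < ((b:ℝ)^(j+1))⁻¹ * ((b:ℝ)*m + k + 1)
    then bexp b ℓ k else 0


lemma intIcoC (a c : ℝ) (h : a ≤ c) : ∫ x in Set.Ico a c, ((x:ℂ)) = (((c^2-a^2)/2 : ℝ) : ℂ) := by
  have h1 : ∫ x in Set.Ico a c, ((x:ℂ)) = ((∫ x in Set.Ico a c, x : ℝ) : ℂ) :=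
    integral_ofReal (f := fun x : ℝ => x) (𝕜 := ℂ)
  rw [h1, Measure.restrict_congr_set Ico_ae_eq_Ioc, ← intervalIntegral.integral_of_le h, integral_id]

lemma keyid (x : ℂ) (n : ℕ) :
    (x - 1) * ∑ k ∈ range n, (k : ℂ) * x ^ k
      = ((n : ℂ) - 1) * x ^ n - (∑ k ∈ range n, x ^ k) + 1 := by
  induction n with
  | zero => simp
  | succ n ih =>
    rw [Finset.sum_range_succ, Finset.sum_range_succ, mul_add, ih]
    push_cast
    ring

lemma sumk (x : ℂ) (n : ℕ) (hx : x ≠ 1) (hxn : x ^ n = 1) :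
    ∑ k ∈ range n, (k : ℂ) * x ^ k = n / (x - 1) := by
  have hx1 : x - 1 ≠ 0 := sub_ne_zero.mpr hx
  have hg : ∑ k ∈ range n, x ^ k = 0 := by
    rw [geom_sum_eq hx, hxn]; simp
  have := keyid x n
  rw [hxn, hg] at this
  field_simp
  linear_combination this

/-- The Haar coefficient of `x₁x₂` for index `j = (j₁, −1)`, the second factor
being `h_{−1,0,1} = 1_{[0,1)}`. -/
theorem haar_coeff_of_volume_mixed (b : ℕ) (hb : 2 ≤ b) (j₁ m₁ ℓ₁ : ℕ)
    (hm₁ : m₁ < b ^ j₁) (hℓ₁ : 1 ≤ ℓ₁) (hℓ₁' : ℓ₁ ≤ b - 1) :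
    (∫ x₁ in Set.Ico (0:ℝ) 1, ∫ x₂ in Set.Ico (0:ℝ) 1,
        (x₁ : ℂ) * (x₂ : ℂ) * haar b j₁ m₁ ℓ₁ x₁)
      = (1/2) * (b : ℂ) ^ (-2*(j₁:ℤ) - 1) /
          (Complex.exp (2 * Real.pi * Complex.I * ℓ₁ / b) - 1) := by
  have hb0 : (0:ℝ) < b := by positivity
  have hbC : (b:ℂ) ≠ 0 := by exact_mod_cast (show (b:ℝ) ≠ 0 from ne_of_gt hb0)
  have hℓb : ℓ₁ < b := by omega
  set ω : ℂ := Complex.exp (2 * Real.pi * Complex.I * ℓ₁ / b) with hωdef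
  -- ω ≠ 1
  have h2pi : (2 * (Real.pi:ℂ) * Complex.I) ≠ 0 := by
    simp [Real.pi_ne_zero, Complex.I_ne_zero]
  have hω1 : ω ≠ 1 := by
    intro h
    rw [hωdef, Complex.exp_eq_one_iff] at h
    obtain ⟨n, hn⟩ := h
    have hℓ : (ℓ₁:ℂ) = n * b := by
      have h3 : (2 * (Real.pi:ℂ) * Complex.I) * ((ℓ₁:ℂ)/b) = (2 * (Real.pi:ℂ) * Complex.I) * n := by
        linear_combination hn
      have h4 := mul_left_cancel₀ h2pi h3
      field_simp at h4
      linear_combination h4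
    have hℓZ : (ℓ₁:ℤ) = n * b := by exact_mod_cast hℓ
    have h1 : (1:ℤ) ≤ ℓ₁ := by exact_mod_cast hℓ₁
    have h2 : (ℓ₁:ℤ) < b := by exact_mod_cast hℓb
    have hbZ : (2:ℤ) ≤ b := by exact_mod_cast hb
    rcases le_or_gt n 0 with hn0 | hn0
    · nlinarith
    · nlinarith
  have hω0 : ω - 1 ≠ 0 := sub_ne_zero.mpr hω1
  have hωb : ω ^ b = 1 := by
    rw [hωdef, ← Complex.exp_nat_mul]
    have : (b:ℂ) * (2 * Real.pi * Complex.I * ℓ₁ / b) = (ℓ₁:ℤ) * (2 * Real.pi * Complex.I) := by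
      push_cast
      field_simp
    rw [this, Complex.exp_int_mul_two_pi_mul_I]
  have hbexp : ∀ k : ℕ, bexp b ℓ₁ k = ω ^ k := by
    intro k
    rw [hωdef, ← Complex.exp_nat_mul, bexp]
    congr 1
    ring
  -- inner integral
  have hhalf : ∫ x in Set.Ico (0:ℝ) 1, ((x:ℂ)) = 1/2 := by
    rw [intIcoC 0 1 (by norm_num)]; norm_num
  have hinner : ∀ x₁ : ℝ,
      (∫ x₂ in Set.Ico (0:ℝ) 1, (x₁ : ℂ) * (x₂ : ℂ) * haar b j₁ m₁ ℓ₁ x₁)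
        = ((x₁:ℂ) * haar b j₁ m₁ ℓ₁ x₁) * (1/2) := by
    intro x₁
    have h1 : ∀ x₂:ℝ, (x₁ : ℂ) * (x₂ : ℂ) * haar b j₁ m₁ ℓ₁ x₁
        = ((x₁:ℂ) * haar b j₁ m₁ ℓ₁ x₁) * (x₂:ℂ) := fun _ => by ring
    simp_rw [h1]
    rw [integral_const_mul, hhalf]
  simp_rw [hinner]
  rw [integral_mul_const]
  -- the intervals
  set δ : ℝ := ((b:ℝ)^(j₁+1))⁻¹ with hδdef
  have hδ0 : 0 < δ := by positivity
  have haarsum : ∀ x : ℝ, (x:ℂ) * haar b j₁ m₁ ℓ₁ x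
      = ∑ k ∈ range b, Set.indicator (Set.Ico (δ * ((b:ℝ)*m₁ + k)) (δ * ((b:ℝ)*m₁ + k + 1)))
          (fun y : ℝ => (y:ℂ) * (ω ^ k)) x := by
    intro x
    rw [haar, Finset.mul_sum]
    refine Finset.sum_congr rfl fun k _ => ?_
    rw [Set.indicator_apply]
    simp only [Set.mem_Ico, hδdef]
    split_ifs with h
    · rw [hbexp]
    · ring
  simp_rw [haarsum]
  have hsub : ∀ k ∈ range b,
      Set.Ico (δ * ((b:ℝ)*m₁ + k)) (δ * ((b:ℝ)*m₁ + k + 1)) ⊆ Set.Ico (0:ℝ) 1 := by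
    intro k hk
    rw [Finset.mem_range] at hk
    apply Set.Ico_subset_Ico
    · positivity
    · rw [hδdef, inv_mul_le_iff₀ (by positivity)]
      have : (b:ℝ)*m₁ + k + 1 ≤ (b:ℝ)^(j₁+1) := by
        have h1 : (m₁:ℝ) ≤ (b:ℝ)^j₁ - 1 := by
          have : (m₁:ℝ) + 1 ≤ (b:ℝ)^j₁ := by exact_mod_cast Nat.succ_le_of_lt hm₁
          linarith
        have h2 : (k:ℝ) ≤ (b:ℝ) - 1 := by
          have : (k:ℝ) + 1 ≤ (b:ℝ) := by exact_mod_cast Nat.succ_le_of_lt hk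
          linarith
        have h3 : (b:ℝ) * ((b:ℝ)^j₁ - 1) + ((b:ℝ) - 1) + 1 = (b:ℝ)^(j₁+1) := by ring
        nlinarith [hb0, mul_le_mul_of_nonneg_left h1 (le_of_lt hb0)]
      nlinarith
  have hint : ∀ k ∈ range b, IntegrableOn
      (Set.indicator (Set.Ico (δ * ((b:ℝ)*m₁ + k)) (δ * ((b:ℝ)*m₁ + k + 1)))
        (fun y : ℝ => (y:ℂ) * (ω ^ k))) (Set.Ico (0:ℝ) 1) := by
    intro k _
    have hc : IntegrableOn (fun y : ℝ => (y:ℂ) * (ω ^ k)) (Set.Ico (0:ℝ) 1) := by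
      exact ((Complex.continuous_ofReal.mul continuous_const).integrableOn_Icc).mono_set Set.Ico_subset_Icc_self
    exact hc.indicator measurableSet_Ico
  rw [integral_finset_sum _ hint]
  have hterm : ∀ k ∈ range b,
      (∫ x in Set.Ico (0:ℝ) 1, Set.indicator (Set.Ico (δ * ((b:ℝ)*m₁ + k)) (δ * ((b:ℝ)*m₁ + k + 1)))
          (fun y : ℝ => (y:ℂ) * (ω ^ k)) x)
        = ((((δ * ((b:ℝ)*m₁ + k + 1))^2 - (δ * ((b:ℝ)*m₁ + k))^2)/2 : ℝ) : ℂ) * ω ^ k := by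
    intro k hk
    rw [setIntegral_indicator measurableSet_Ico,
      Set.inter_eq_self_of_subset_right (hsub k hk), integral_mul_const,
      intIcoC _ _ (by nlinarith [hδ0])]
  rw [Finset.sum_congr rfl hterm]
  -- now pure algebra
  have hsum1 : ∑ k ∈ range b, (k:ℂ) * ω ^ k = b / (ω - 1) := sumk ω b hω1 hωb
  have hsum0 : ∑ k ∈ range b, ω ^ k = 0 := by rw [geom_sum_eq hω1, hωb]; simp
  set δC : ℂ := ((b:ℂ)^(j₁+1))⁻¹ with hδCdef
  have hcast : (δ:ℂ) = δC := by rw [hδdef, hδCdef]; push_cast; ring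
  have hterm2 : ∀ k ∈ range b,
      ((((δ * ((b:ℝ)*m₁ + k + 1))^2 - (δ * ((b:ℝ)*m₁ + k))^2)/2 : ℝ) : ℂ) * ω ^ k
        = δC^2 * ((k:ℂ) * ω ^ k) + (δC^2 * ((b:ℂ)*m₁) + δC^2/2) * ω ^ k := by
    intro k _
    push_cast
    rw [hcast]
    ring
  rw [Finset.sum_congr rfl hterm2, Finset.sum_add_distrib, ← Finset.mul_sum, ← Finset.mul_sum,
    hsum1, hsum0, mul_zero, add_zero]
  -- δC^2 * (b/(ω-1)) * (1/2) = (1/2) * b^(-2j-1) / (ω-1)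
  have hpow : δC^2 * (b:ℂ) = (b:ℂ) ^ (-2*(j₁:ℤ) - 1) := by
    have h5 : (b:ℂ)^(-2*(j₁:ℤ)-1) = ((b:ℂ)^(2*j₁+1 : ℕ))⁻¹ := by
      rw [← zpow_natCast (b:ℂ) (2*j₁+1), ← zpow_neg]
      congr 1
      push_cast
      ring
    rw [h5, hδCdef]
    field_simp
    ring
  rw [div_eq_mul_inv, div_eq_mul_inv]
  rw [← hpow]
  ring
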